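/- The generalized exponent count in the partition monoid satisfies a cocycle identity: for all τ, ρ, σ ∈ Pₙ, c(τ ∘ ρ, σ) + c(τ, ρ) = c(τ, ρ ∘ σ) + c(ρ, σ), where c(τ,ρ) counts the equivalence classes of the joined relation that are confined to the middle row of vertices. -/

import Mathlib

open scoped Classical
open Relation
noncomputable section

/-- Vertices of a diagram: `inl` = unprimed points `n̄`, `inr` = primed points `n̄'`. -/
abbrev DVert (n : ℕ) := Fin n ⊕ Fin n

/-- Tripled vertex set used for gluing: bottom (unprimed of the right factor),
middle (identified vertices), top (primed of the left factor). -/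
abbrev TVert (n : ℕ) := Fin n ⊕ (Fin n ⊕ Fin n)

def embBot (n : ℕ) : DVert n → TVert n := Sum.elim Sum.inl (fun i => Sum.inr (Sum.inl i))
def embTop (n : ℕ) : DVert n → TVert n :=
  Sum.elim (fun i => Sum.inr (Sum.inl i)) (fun i => Sum.inr (Sum.inr i))
def embOut (n : ℕ) : DVert n → TVert n := Sum.elim Sum.inl (fun i => Sum.inr (Sum.inr i))

/-- The minimal equivalence relation `χ` on the tripled vertex set containing
(the embedded copies of) `τ` and `ρ`. -/
def glue (n : ℕ) (τ ρ : Setoid (DVert n)) : Setoid (TVert n) :=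
  EqvGen.setoid (fun x y =>
    (∃ a b, ρ.r a b ∧ x = embBot n a ∧ y = embBot n b) ∨
    (∃ a b, τ.r a b ∧ x = embTop n a ∧ y = embTop n b))

/-- Composition `τ ∘ ρ` in the partition monoid: glue and restrict to the outer vertices. -/
def pcomp (n : ℕ) (τ ρ : Setoid (DVert n)) : Setoid (DVert n) where
  r x y := (glue n τ ρ).r (embOut n x) (embOut n y)
  iseqv := ⟨fun _ => (glue n τ ρ).iseqv.refl _, fun h => (glue n τ ρ).iseqv.symm h,
    fun h₁ h₂ => (glue n τ ρ).iseqv.trans h₁ h₂⟩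

/-- A middle vertex of the tripled vertex set. -/
def isMiddle {n : ℕ} (x : TVert n) : Prop := ∃ i, x = Sum.inr (Sum.inl i)

/-- `c(τ,ρ)`: the number of classes of the glued relation contained in the middle row. -/
def ccount (n : ℕ) (τ ρ : Setoid (DVert n)) : ℕ :=
  {C ∈ (glue n τ ρ).classes | ∀ x ∈ C, isMiddle x}.ncard

/-- A propagating part: one meeting both the unprimed and the primed vertices. -/
def IsPropagating {n : ℕ} (C : Set (DVert n)) : Prop :=
  (∃ i, Sum.inl i ∈ C) ∧ (∃ i, Sum.inr i ∈ C)

/-- The rank `r(σ)`: the number of propagating parts of `σ`. -/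
def prank (n : ℕ) (σ : Setoid (DVert n)) : ℕ :=
  {C ∈ σ.classes | IsPropagating C}.ncard

/-- The anti-involution `⋆` swapping primed and unprimed vertices. -/
def pstar (n : ℕ) (σ : Setoid (DVert n)) : Setoid (DVert n) where
  r x y := σ.r x.swap y.swap
  iseqv := ⟨fun _ => σ.iseqv.refl _, fun h => σ.iseqv.symm h,
    fun h₁ h₂ => σ.iseqv.trans h₁ h₂⟩

/-- Minimal unprimed vertex of a part. -/
def minL {n : ℕ} (C : Set (DVert n)) : ℕ :=
  sInf {m : ℕ | ∃ j : Fin n, (j : ℕ) = m ∧ Sum.inl j ∈ C}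

/-- Minimal primed vertex of a part. -/
def minR {n : ℕ} (C : Set (DVert n)) : ℕ :=
  sInf {m : ℕ | ∃ j : Fin n, (j : ℕ) = m ∧ Sum.inr j ∈ C}

/-- Position of a propagating part `C` of `σ` in the ordering (by minimal elements) of the
intersections of the propagating parts with the unprimed vertices. -/
def posL (n : ℕ) (σ : Setoid (DVert n)) (C : Set (DVert n)) : ℕ :=
  {D ∈ σ.classes | IsPropagating D ∧ minL D < minL C}.ncard

/-- Position of a propagating part `C` of `σ` in the ordering (by minimal elements) of the
intersections of the propagating parts with the primed vertices. -/
def posR (n : ℕ) (σ : Setoid (DVert n)) (C : Set (DVert n)) : ℕ :=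
  {D ∈ σ.classes | IsPropagating D ∧ minR D < minR C}.ncard

/-- The permutation `π_σ ∈ S_k` recording how propagating lines connect the two sides of `σ`
(for a diagram of rank `k`): the unique permutation sending the position of a propagating part
on the unprimed side to its position on the primed side. -/
def permAt (n k : ℕ) (σ : Setoid (DVert n)) : Equiv.Perm (Fin k) :=
  Classical.epsilon (fun π : Equiv.Perm (Fin k) =>
    ∀ C ∈ σ.classes, IsPropagating C → ∀ h : posL n σ C < k,
      ((π ⟨posL n σ C, h⟩ : Fin k) : ℕ) = posR n σ C)

/-- The product of the partition algebra `𝐏ₙ(δ)` on the free vector space on diagrams. -/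
def pmul (n : ℕ) (δ : ℂ) (f g : Setoid (DVert n) →₀ ℂ) : Setoid (DVert n) →₀ ℂ :=
  f.sum fun τ a => g.sum fun ρ b =>
    Finsupp.single (pcomp n τ ρ) (δ ^ ccount n τ ρ * (a * b))

/-- `i(π,s)`: the number of pairs `i < j` with `s i = j` and `π i > π j`. -/
def icount (n : ℕ) (π s : Equiv.Perm (Fin n)) : ℕ :=
  (Finset.univ.filter fun p : Fin n × Fin n => p.1 < p.2 ∧ s p.1 = p.2 ∧ π p.2 < π p.1).card


/-! ### Auxiliary development for the cocycle identity -/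

theorem eqvGen_map' {α β : Type*} {r : α → α → Prop} {s : β → β → Prop} (f : α → β)
    (hf : ∀ a b, r a b → EqvGen s (f a) (f b)) :
    ∀ {x y}, EqvGen r x y → EqvGen s (f x) (f y) := by
  intro x y h
  induction h with
  | rel a b h => exact hf a b h
  | refl a => exact EqvGen.refl _
  | symm a b _ ih => exact EqvGen.symm _ _ ih
  | trans a b c _ _ ih1 ih2 => exact EqvGen.trans _ _ _ ih1 ih2

/-- Transport of the count of classes satisfying a predicate along a bijection. -/
theorem ncard_classes_transport {α β : Type*} (X : Setoid α) (Y : Setoid β)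
    (f : α → β) (g : β → α) (hgf : ∀ a, g (f a) = a) (hfg : ∀ b, f (g b) = b)
    (hr : ∀ a b, X.r a b ↔ Y.r (f a) (f b))
    (P : α → Prop) (Q : β → Prop) (hPQ : ∀ a, P a ↔ Q (f a)) :
    {C ∈ X.classes | ∀ x ∈ C, P x}.ncard = {C ∈ Y.classes | ∀ y ∈ C, Q y}.ncard := by
  have hfinj : Function.Injective f := fun a b h => by rw [← hgf a, h, hgf b]
  have himinj : Function.Injective (Set.image f) := Set.image_injective.2 hfinj
  have himg : Set.image f '' {C ∈ X.classes | ∀ x ∈ C, P x}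
      = {C ∈ Y.classes | ∀ y ∈ C, Q y} := by
    ext D
    constructor
    · rintro ⟨C, ⟨⟨y, rfl⟩, hP⟩, rfl⟩
      refine ⟨⟨f y, ?_⟩, ?_⟩
      · ext z
        constructor
        · rintro ⟨x, hx, rfl⟩
          exact (hr x y).1 hx
        · intro hz
          exact ⟨g z, (hr (g z) y).2 (by rw [hfg]; exact hz), hfg z⟩
      · rintro z ⟨x, hx, rfl⟩
        exact (hPQ x).1 (hP x hx)
    · rintro ⟨⟨w, rfl⟩, hQ⟩
      refine ⟨{x | X.r x (g w)}, ⟨⟨g w, rfl⟩, ?_⟩, ?_⟩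
      · intro x hx
        rw [hPQ]
        exact hQ _ (by have := (hr x (g w)).1 hx; rwa [hfg] at this)
      · ext z
        constructor
        · rintro ⟨x, hx, rfl⟩
          have := (hr x (g w)).1 hx; rwa [hfg] at this
        · intro hz
          exact ⟨g z, (hr (g z) (g w)).2 (by rw [hfg, hfg]; exact hz), hfg z⟩
  rw [← himg, Set.ncard_image_of_injective _ himinj]

theorem class_rep {α : Type*} {s : Setoid α} {C : Set α} (hC : C ∈ s.classes) {z : α}
    (hz : z ∈ C) : C = {x | s.r x z} := by
  obtain ⟨y, rfl⟩ := hC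
  have hzy : s.r z y := hz
  ext x
  exact ⟨fun h => s.trans h (s.symm hzy), fun h => s.trans h hzy⟩

/-- Quadrupled vertex set: bottom, mid1, mid2, top. -/
abbrev QVert (n : ℕ) := Fin n ⊕ TVert n

def qE0 (n : ℕ) : DVert n → QVert n := Sum.elim Sum.inl (fun i => Sum.inr (Sum.inl i))
def qE1 (n : ℕ) : DVert n → QVert n := fun a => Sum.inr (embBot n a)
def qE2 (n : ℕ) : DVert n → QVert n := fun a => Sum.inr (embTop n a)

def qbase (n : ℕ) (τ ρ σ : Setoid (DVert n)) : QVert n → QVert n → Prop := fun x y =>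
  (∃ a b, σ.r a b ∧ x = qE0 n a ∧ y = qE0 n b) ∨
  (∃ a b, ρ.r a b ∧ x = qE1 n a ∧ y = qE1 n b) ∨
  (∃ a b, τ.r a b ∧ x = qE2 n a ∧ y = qE2 n b)

def qglue (n : ℕ) (τ ρ σ : Setoid (DVert n)) : Setoid (QVert n) :=
  EqvGen.setoid (qbase n τ ρ σ)

def Mid12 {n : ℕ} (x : QVert n) : Prop :=
  (∃ i, x = Sum.inr (Sum.inl i)) ∨ (∃ i, x = Sum.inr (Sum.inr (Sum.inl i)))

def Ncount (n : ℕ) (τ ρ σ : Setoid (DVert n)) : ℕ :=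
  {C ∈ (qglue n τ ρ σ).classes | ∀ x ∈ C, Mid12 x}.ncard

/-- Embedding of the (bottom, mid1, top) triple into the quadruple. -/
def kap (n : ℕ) : TVert n → QVert n :=
  Sum.elim Sum.inl
    (Sum.elim (fun i => Sum.inr (Sum.inl i)) (fun i => Sum.inr (Sum.inr (Sum.inr i))))

section Side1

variable (n : ℕ) (τ ρ σ : Setoid (DVert n))

theorem kap_embBot (a : DVert n) : kap n (embBot n a) = qE0 n a := by cases a <;> rfl
theorem kap_embTop (a : DVert n) : kap n (embTop n a) = Sum.inr (embOut n a) := by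
  cases a <;> rfl

def link (x : QVert n) (p : TVert n) : Prop :=
  x = kap n p ∨ ∃ u a, x = Sum.inr u ∧ (glue n τ ρ).r u (embOut n a) ∧ p = embTop n a

def Psi (x y : QVert n) : Prop :=
  (∃ u v, x = Sum.inr u ∧ y = Sum.inr v ∧ (glue n τ ρ).r u v) ∨
  (∃ p q, link n τ ρ x p ∧ link n τ ρ y q ∧ (glue n (pcomp n τ ρ) σ).r p q)

theorem out_to_G {a b : DVert n} (h : (glue n τ ρ).r (embOut n a) (embOut n b)) :
    (glue n (pcomp n τ ρ) σ).r (embTop n a) (embTop n b) :=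
  EqvGen.rel _ _ (Or.inr ⟨a, b, h, rfl, rfl⟩)

theorem link_inr {u : TVert n} {p : TVert n} :
    link n τ ρ (Sum.inr u) p ↔ ∃ a, (glue n τ ρ).r u (embOut n a) ∧ p = embTop n a := by
  constructor
  · rintro (h | ⟨u', a, he, hS, rfl⟩)
    · rcases p with i | i | i
      · exact absurd h (by simp [kap])
      · refine ⟨Sum.inl i, ?_, rfl⟩
        have : u = Sum.inl i := by simpa [kap] using h
        rw [this]; exact (glue n τ ρ).refl' _
      · refine ⟨Sum.inr i, ?_, rfl⟩
        have : u = Sum.inr (Sum.inr i) := by simpa [kap] using h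
        rw [this]; exact (glue n τ ρ).refl' _
    · obtain rfl : u = u' := by injection he
      exact ⟨a, hS, rfl⟩
  · rintro ⟨a, hS, rfl⟩
    exact Or.inr ⟨u, a, rfl, hS, rfl⟩

theorem link_inl {i : Fin n} {p : TVert n} :
    link n τ ρ (Sum.inl i) p ↔ p = Sum.inl i := by
  constructor
  · rintro (h | ⟨u, a, he, hS, rfl⟩)
    · rcases p with j | j | j
      · simpa [kap] using h.symm
      · exact absurd h (by simp [kap])
      · exact absurd h (by simp [kap])
    · exact absurd he (by simp)
  · rintro rfl
    exact Or.inl rfl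

theorem link_G {x : QVert n} {p q : TVert n} (hp : link n τ ρ x p) (hq : link n τ ρ x q) :
    (glue n (pcomp n τ ρ) σ).r p q := by
  rcases x with i | u
  · rw [link_inl] at hp hq
    rw [hp, hq]
  · rw [link_inr] at hp hq
    obtain ⟨a, ha, rfl⟩ := hp
    obtain ⟨b, hb, rfl⟩ := hq
    exact out_to_G n τ ρ σ ((glue n τ ρ).trans ((glue n τ ρ).symm ha) hb)

theorem link_kap {u : TVert n} {p : TVert n} (h : link n τ ρ (kap n u) p) :
    (glue n (pcomp n τ ρ) σ).r u p := by
  rcases u with i | i | i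
  · rw [show kap n (Sum.inl i) = Sum.inl i from rfl, link_inl] at h
    rw [h]
  · rw [show kap n (Sum.inr (Sum.inl i)) = Sum.inr (Sum.inl i) from rfl, link_inr] at h
    obtain ⟨a, ha, rfl⟩ := h
    exact out_to_G n τ ρ σ (a := Sum.inl i) ha
  · rw [show kap n (Sum.inr (Sum.inr i)) = Sum.inr (Sum.inr (Sum.inr i)) from rfl,
      link_inr] at h
    obtain ⟨a, ha, rfl⟩ := h
    exact out_to_G n τ ρ σ (a := Sum.inr i) ha

theorem link_self (u : TVert n) : link n τ ρ (kap n u) u := Or.inl rfl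

theorem S_chi {u v : TVert n} (h : (glue n τ ρ).r u v) :
    (qglue n τ ρ σ).r (Sum.inr u) (Sum.inr v) := by
  refine eqvGen_map' (Sum.inr : TVert n → QVert n) ?_ h
  rintro a b (⟨c, d, hcd, rfl, rfl⟩ | ⟨c, d, hcd, rfl, rfl⟩)
  · exact EqvGen.rel _ _ (Or.inr (Or.inl ⟨c, d, hcd, rfl, rfl⟩))
  · exact EqvGen.rel _ _ (Or.inr (Or.inr ⟨c, d, hcd, rfl, rfl⟩))

theorem G_chi {p q : TVert n} (h : (glue n (pcomp n τ ρ) σ).r p q) :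
    (qglue n τ ρ σ).r (kap n p) (kap n q) := by
  refine eqvGen_map' (kap n) ?_ h
  rintro a b (⟨c, d, hcd, rfl, rfl⟩ | ⟨c, d, hcd, rfl, rfl⟩)
  · rw [kap_embBot, kap_embBot]
    exact EqvGen.rel _ _ (Or.inl ⟨c, d, hcd, rfl, rfl⟩)
  · rw [kap_embTop, kap_embTop]
    exact S_chi n τ ρ σ hcd

theorem link_chi {x : QVert n} {p : TVert n} (h : link n τ ρ x p) :
    (qglue n τ ρ σ).r x (kap n p) := by
  rcases h with rfl | ⟨u, a, rfl, hS, rfl⟩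
  · exact (qglue n τ ρ σ).refl' _
  · rw [kap_embTop]
    exact S_chi n τ ρ σ hS

theorem psi_refl (x : QVert n) : Psi n τ ρ σ x x := by
  rcases x with i | u
  · exact Or.inr ⟨Sum.inl i, Sum.inl i, Or.inl rfl, Or.inl rfl,
      (glue n (pcomp n τ ρ) σ).refl' _⟩
  · exact Or.inl ⟨u, u, rfl, rfl, (glue n τ ρ).refl' _⟩

theorem psi_symm {x y : QVert n} (h : Psi n τ ρ σ x y) : Psi n τ ρ σ y x := by
  rcases h with ⟨u, v, hx, hy, hS⟩ | ⟨p, q, hp, hq, hG⟩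
  · exact Or.inl ⟨v, u, hy, hx, (glue n τ ρ).symm hS⟩
  · exact Or.inr ⟨q, p, hq, hp, (glue n (pcomp n τ ρ) σ).symm hG⟩

theorem psi_trans {x y z : QVert n} (h1 : Psi n τ ρ σ x y) (h2 : Psi n τ ρ σ y z) :
    Psi n τ ρ σ x z := by
  rcases h1 with ⟨u, v, rfl, rfl, hS⟩ | ⟨p, q, hp, hq, hG⟩
  · rcases h2 with ⟨v', w, hv, rfl, hS'⟩ | ⟨p, q, hp, hq, hG⟩
    · obtain rfl : v = v' := by injection hv
      exact Or.inl ⟨u, w, rfl, rfl, (glue n τ ρ).trans hS hS'⟩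
    · rw [link_inr] at hp
      obtain ⟨a, ha, rfl⟩ := hp
      refine Or.inr ⟨embTop n a, q, ?_, hq, hG⟩
      rw [link_inr]
      exact ⟨a, (glue n τ ρ).trans hS ha, rfl⟩
  · rcases h2 with ⟨v, w, rfl, rfl, hS⟩ | ⟨p', q', hp', hq', hG'⟩
    · rw [link_inr] at hq
      obtain ⟨a, ha, rfl⟩ := hq
      refine Or.inr ⟨p, embTop n a, hp, ?_, hG⟩
      rw [link_inr]
      exact ⟨a, (glue n τ ρ).trans ((glue n τ ρ).symm hS) ha, rfl⟩
    · exact Or.inr ⟨p, q', hp, hq',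
        (glue n (pcomp n τ ρ) σ).trans hG
          ((glue n (pcomp n τ ρ) σ).trans (link_G n τ ρ σ hq hp') hG')⟩

theorem base_psi {x y : QVert n} (h : qbase n τ ρ σ x y) : Psi n τ ρ σ x y := by
  rcases h with ⟨a, b, hab, rfl, rfl⟩ | ⟨a, b, hab, rfl, rfl⟩ | ⟨a, b, hab, rfl, rfl⟩
  · refine Or.inr ⟨embBot n a, embBot n b, ?_, ?_, EqvGen.rel _ _ (Or.inl ⟨a, b, hab, rfl, rfl⟩)⟩
    · rw [← kap_embBot]; exact Or.inl rfl
    · rw [← kap_embBot]; exact Or.inl rfl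
  · exact Or.inl ⟨embBot n a, embBot n b, rfl, rfl, EqvGen.rel _ _ (Or.inl ⟨a, b, hab, rfl, rfl⟩)⟩
  · exact Or.inl ⟨embTop n a, embTop n b, rfl, rfl, EqvGen.rel _ _ (Or.inr ⟨a, b, hab, rfl, rfl⟩)⟩

theorem chi_iff_psi {x y : QVert n} : (qglue n τ ρ σ).r x y ↔ Psi n τ ρ σ x y := by
  constructor
  · intro h
    induction h with
    | rel a b h => exact base_psi n τ ρ σ h
    | refl a => exact psi_refl n τ ρ σ a
    | symm a b _ ih => exact psi_symm n τ ρ σ ih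
    | trans a b c _ _ ih1 ih2 => exact psi_trans n τ ρ σ ih1 ih2
  · rintro (⟨u, v, rfl, rfl, hS⟩ | ⟨p, q, hp, hq, hG⟩)
    · exact S_chi n τ ρ σ hS
    · exact (qglue n τ ρ σ).trans (link_chi n τ ρ σ hp)
        ((qglue n τ ρ σ).trans (G_chi n τ ρ σ hG)
          ((qglue n τ ρ σ).symm (link_chi n τ ρ σ hq)))

theorem kap_eq_inr {u : TVert n} {w : TVert n} (h : kap n u = Sum.inr w) :
    ∃ a, u = embTop n a ∧ w = embOut n a := by
  rcases u with i | i | i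
  · exact absurd h (by simp [kap])
  · exact ⟨Sum.inl i, rfl, by simpa [kap, embOut] using h.symm⟩
  · exact ⟨Sum.inr i, rfl, by simpa [kap, embOut] using h.symm⟩

theorem chi_kap {u v : TVert n} :
    (qglue n τ ρ σ).r (kap n u) (kap n v) ↔ (glue n (pcomp n τ ρ) σ).r u v := by
  constructor
  · intro h
    rcases (chi_iff_psi n τ ρ σ).1 h with ⟨u', v', hu, hv, hS⟩ | ⟨p, q, hp, hq, hG⟩
    · obtain ⟨a, rfl, rfl⟩ := kap_eq_inr n hu
      obtain ⟨b, rfl, rfl⟩ := kap_eq_inr n hv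
      exact out_to_G n τ ρ σ hS
    · exact (glue n (pcomp n τ ρ) σ).trans (link_kap n τ ρ σ hp)
        ((glue n (pcomp n τ ρ) σ).trans hG
          ((glue n (pcomp n τ ρ) σ).symm (link_kap n τ ρ σ hq)))
  · exact G_chi n τ ρ σ

theorem chi_inr {u v : TVert n} :
    (qglue n τ ρ σ).r (Sum.inr u) (Sum.inr v) ↔
      (glue n τ ρ).r u v ∨ ∃ a b, (glue n τ ρ).r u (embOut n a) ∧
        (glue n τ ρ).r v (embOut n b) ∧
        (glue n (pcomp n τ ρ) σ).r (embTop n a) (embTop n b) := by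
  constructor
  · intro h
    rcases (chi_iff_psi n τ ρ σ).1 h with ⟨u', v', hu, hv, hS⟩ | ⟨p, q, hp, hq, hG⟩
    · obtain rfl : u = u' := by injection hu
      obtain rfl : v = v' := by injection hv
      exact Or.inl hS
    · rw [link_inr] at hp hq
      obtain ⟨a, ha, rfl⟩ := hp
      obtain ⟨b, hb, rfl⟩ := hq
      exact Or.inr ⟨a, b, ha, hb, hG⟩
  · rintro (h | ⟨a, b, ha, hb, hG⟩)
    · exact S_chi n τ ρ σ h
    · have h1 := S_chi n τ ρ σ ha
      have h2 := G_chi n τ ρ σ hG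
      rw [kap_embTop, kap_embTop] at h2
      have h3 := S_chi n τ ρ σ hb
      exact (qglue n τ ρ σ).trans h1 ((qglue n τ ρ σ).trans h2 ((qglue n τ ρ σ).symm h3))

end Side1
section Counting

variable (n : ℕ) (τ ρ σ : Setoid (DVert n))

theorem kap_mid1 {u : TVert n} {j : Fin n} (h : kap n u = Sum.inr (Sum.inl j)) :
    u = Sum.inr (Sum.inl j) := by
  rcases u with i | i | i
  · exact absurd h (by simp [kap])
  · simpa [kap] using h
  · exact absurd h (by simp [kap])

theorem kap_ne_mid2 (u : TVert n) (j : Fin n) : kap n u ≠ Sum.inr (Sum.inr (Sum.inl j)) := by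
  rcases u with i | i | i <;> simp [kap]

theorem embOut_ne_mid (a : DVert n) (j : Fin n) : embOut n a ≠ Sum.inr (Sum.inl j) := by
  rcases a with i | i <;> simp [embOut]

theorem ncardA1 :
    {C | C ∈ (qglue n τ ρ σ).classes ∧ (∀ x ∈ C, Mid12 x) ∧
        ∃ i : Fin n, Sum.inr (Sum.inl i) ∈ C}.ncard = ccount n (pcomp n τ ρ) σ := by
  set χ := qglue n τ ρ σ with hχ
  set G := glue n (pcomp n τ ρ) σ with hG
  set A1 : Set (Set (QVert n)) :=
    {C | C ∈ χ.classes ∧ (∀ x ∈ C, Mid12 x) ∧ ∃ i : Fin n, Sum.inr (Sum.inl i) ∈ C} with hA1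
  have hinj : Set.InjOn (fun C => kap n ⁻¹' C) A1 := by
    rintro C ⟨hCcl, hCm, i, hi⟩ C' ⟨hC'cl, hC'm, i', hi'⟩ h
    have h1 : (Sum.inr (Sum.inl i) : TVert n) ∈ kap n ⁻¹' C := by
      show kap n _ ∈ C
      rw [show kap n (Sum.inr (Sum.inl i)) = Sum.inr (Sum.inl i) from rfl]
      exact hi
    replace h : kap n ⁻¹' C = kap n ⁻¹' C' := h
    rw [h] at h1
    have h2 : (Sum.inr (Sum.inl i) : QVert n) ∈ C' := by
      have := h1
      rwa [Set.mem_preimage, show kap n (Sum.inr (Sum.inl i)) = Sum.inr (Sum.inl i) from rfl]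
        at this
    exact Setoid.eq_of_mem_classes hCcl hi hC'cl h2
  have himg : (fun C => kap n ⁻¹' C) '' A1 = {D ∈ G.classes | ∀ x ∈ D, isMiddle x} := by
    ext D
    constructor
    · rintro ⟨C, ⟨hCcl, hCm, i, hi⟩, rfl⟩
      have hC : C = {x | χ.r x (Sum.inr (Sum.inl i))} := class_rep hCcl hi
      have hDeq : kap n ⁻¹' C = {u | G.r u (Sum.inr (Sum.inl i))} := by
        rw [hC]
        ext u
        show χ.r (kap n u) (Sum.inr (Sum.inl i)) ↔ _
        rw [show (Sum.inr (Sum.inl i) : QVert n) = kap n (Sum.inr (Sum.inl i)) from rfl]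
        exact chi_kap n τ ρ σ
      refine ⟨by show kap n ⁻¹' C ∈ _; rw [hDeq]; exact ⟨_, rfl⟩, ?_⟩
      intro u hu
      have hku : kap n u ∈ C := hu
      rcases hCm _ hku with ⟨j, hj⟩ | ⟨j, hj⟩
      · exact ⟨j, kap_mid1 n hj⟩
      · exact absurd hj (kap_ne_mid2 n u j)
    · rintro ⟨⟨w, rfl⟩, hDm⟩
      obtain ⟨i, rfl⟩ : isMiddle w := hDm w (G.refl' w)
      refine ⟨{x | χ.r x (Sum.inr (Sum.inl i))}, ⟨⟨_, rfl⟩, ?_, ⟨i, χ.refl' _⟩⟩, ?_⟩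
      · -- every element of this χ-class lies in the two middle rows
        intro x hx
        have hx' : χ.r x (Sum.inr (Sum.inl i)) := hx
        rcases x with b | u
        · exfalso
          rcases (chi_iff_psi n τ ρ σ).1 hx' with ⟨u', v', hu, _, _⟩ | ⟨p, q, hp, hq, hPQ⟩
          · exact absurd hu (by simp)
          · rw [link_inl] at hp
            subst hp
            rw [link_inr] at hq
            obtain ⟨a, ha, rfl⟩ := hq
            have h1 : G.r (embTop n (Sum.inl i)) (embTop n a) :=
              out_to_G n τ ρ σ (a := Sum.inl i) ha
            have h2 : embTop n a ∈ {x | G.r x (Sum.inr (Sum.inl i))} :=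
              G.symm h1
            have h3 : isMiddle (embTop n a) := hDm _ h2
            obtain ⟨j, hj⟩ := h3
            obtain rfl : a = Sum.inl j := by
              rcases a with c | c
              · have hcj : c = j := by simpa [embTop] using hj
                rw [hcj]
              · exact absurd hj (by simp [embTop])
            have h4 : (Sum.inl b : TVert n) ∈ {x | G.r x (Sum.inr (Sum.inl i))} :=
              G.trans hPQ h2
            obtain ⟨j', hj'⟩ := hDm _ h4
            exact absurd hj' (by simp)
        · rcases u with j | j | j
          · exact Or.inl ⟨j, rfl⟩
          · exact Or.inr ⟨j, rfl⟩
          · exfalso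
            rcases (chi_inr n τ ρ σ).1 hx' with h | ⟨a, b, ha, hb, hab⟩
            · have h1 : G.r (embTop n (Sum.inr j)) (embTop n (Sum.inl i)) :=
                out_to_G n τ ρ σ (a := Sum.inr j) (b := Sum.inl i) h
              have h2 : isMiddle (embTop n (Sum.inr j)) := hDm _ h1
              obtain ⟨j', hj'⟩ := h2
              exact absurd hj' (by simp [embTop])
            · have h1 : G.r (embTop n (Sum.inr j)) (embTop n a) :=
                out_to_G n τ ρ σ (a := Sum.inr j) ha
              have h2 : G.r (embTop n (Sum.inl i)) (embTop n b) :=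
                out_to_G n τ ρ σ (a := Sum.inl i) hb
              have hab' : G.r (embTop n a) (embTop n b) := hab
              have h2' : G.r (embTop n b) (embTop n (Sum.inl i)) := G.symm h2
              have h4 : G.r (embTop n a) (embTop n (Sum.inl i)) := G.trans hab' h2'
              have h3 : G.r (embTop n (Sum.inr j)) (Sum.inr (Sum.inl i)) :=
                G.trans h1 h4
              obtain ⟨j', hj'⟩ := hDm _ h3
              exact absurd hj' (by simp [embTop])
      · ext u
        show χ.r (kap n u) (Sum.inr (Sum.inl i)) ↔ _
        rw [show (Sum.inr (Sum.inl i) : QVert n) = kap n (Sum.inr (Sum.inl i)) from rfl]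
        exact chi_kap n τ ρ σ
  rw [ccount, ← hG, ← himg, Set.ncard_image_of_injOn hinj]

theorem ncardA2 :
    {C | C ∈ (qglue n τ ρ σ).classes ∧
        ∀ x ∈ C, ∃ i : Fin n, x = Sum.inr (Sum.inr (Sum.inl i))}.ncard = ccount n τ ρ := by
  set χ := qglue n τ ρ σ with hχ
  set S := glue n τ ρ with hS
  set G := glue n (pcomp n τ ρ) σ with hG
  set A2 : Set (Set (QVert n)) :=
    {C | C ∈ χ.classes ∧ ∀ x ∈ C, ∃ i : Fin n, x = Sum.inr (Sum.inr (Sum.inl i))} with hA2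
  have hwit : ∀ C ∈ A2, ∃ i : Fin n, Sum.inr (Sum.inr (Sum.inl i)) ∈ C := by
    rintro C ⟨⟨y, rfl⟩, hCm⟩
    have hy : y ∈ {x | χ.r x y} := χ.refl' y
    obtain ⟨i, rfl⟩ := hCm y hy
    exact ⟨i, hy⟩
  have hinj : Set.InjOn (fun C => (Sum.inr : TVert n → QVert n) ⁻¹' C) A2 := by
    rintro C hC C' hC' h
    obtain ⟨i, hi⟩ := hwit C hC
    have h1 : (Sum.inr (Sum.inl i) : TVert n) ∈ (Sum.inr : TVert n → QVert n) ⁻¹' C := hi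
    replace h : (Sum.inr : TVert n → QVert n) ⁻¹' C = (Sum.inr : TVert n → QVert n) ⁻¹' C' := h
    rw [h] at h1
    exact Setoid.eq_of_mem_classes hC.1 hi hC'.1 h1
  have himg : (fun C => (Sum.inr : TVert n → QVert n) ⁻¹' C) '' A2
      = {D ∈ S.classes | ∀ x ∈ D, isMiddle x} := by
    ext D
    constructor
    · rintro ⟨C, hC, rfl⟩
      obtain ⟨i, hi⟩ := hwit C hC
      obtain ⟨hCcl, hCm⟩ := hC
      have hCrep : C = {x | χ.r x (Sum.inr (Sum.inr (Sum.inl i)))} := class_rep hCcl hi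
      have hDeq : (Sum.inr : TVert n → QVert n) ⁻¹' C
          = {u | S.r u (Sum.inr (Sum.inl i))} := by
        rw [hCrep]
        ext u
        show χ.r (Sum.inr u) (Sum.inr (Sum.inr (Sum.inl i))) ↔ _
        rw [chi_inr n τ ρ σ]
        constructor
        · rintro (h | ⟨a, b, ha, hb, hab⟩)
          · exact h
          · exfalso
            have h1 : χ.r (Sum.inr (Sum.inr (Sum.inl i))) (Sum.inr (embOut n b)) :=
              S_chi n τ ρ σ hb
            have h2 : Sum.inr (embOut n b) ∈ C := by
              rw [hCrep]
              exact χ.symm h1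
            obtain ⟨j, hj⟩ := hCm _ h2
            have : embOut n b = Sum.inr (Sum.inl j) := by injection hj
            exact embOut_ne_mid n b j this
        · exact fun h => Or.inl h
      refine ⟨by show (Sum.inr : TVert n → QVert n) ⁻¹' C ∈ _; rw [hDeq]; exact ⟨_, rfl⟩, ?_⟩
      intro u hu
      have : Sum.inr u ∈ C := hu
      obtain ⟨j, hj⟩ := hCm _ this
      exact ⟨j, by injection hj⟩
    · rintro ⟨⟨w, rfl⟩, hDm⟩
      obtain ⟨i, rfl⟩ : isMiddle w := hDm w (S.refl' w)
      have hnb : ∀ b : DVert n, ¬ S.r (Sum.inr (Sum.inl i)) (embOut n b) := by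
        intro b hb
        obtain ⟨j, hj⟩ := hDm _ (S.symm hb)
        exact embOut_ne_mid n b j hj
      refine ⟨{x | χ.r x (Sum.inr (Sum.inr (Sum.inl i)))}, ⟨⟨_, rfl⟩, ?_⟩, ?_⟩
      · intro x hx
        have hx' : χ.r x (Sum.inr (Sum.inr (Sum.inl i))) := hx
        rcases x with b | u
        · exfalso
          rcases (chi_iff_psi n τ ρ σ).1 hx' with ⟨u', v', hu, _, _⟩ | ⟨p, q, hp, hq, hPQ⟩
          · exact absurd hu (by simp)
          · rw [link_inr] at hq
            obtain ⟨a, ha, rfl⟩ := hq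
            exact hnb a ha
        · rcases (chi_inr n τ ρ σ).1 hx' with h | ⟨a, b, ha, hb, hab⟩
          · obtain ⟨j, hj⟩ := hDm u h
            exact ⟨j, by rw [hj]⟩
          · exact absurd hb (hnb b)
      · ext u
        show χ.r (Sum.inr u) (Sum.inr (Sum.inr (Sum.inl i))) ↔ _
        rw [chi_inr n τ ρ σ]
        constructor
        · rintro (h | ⟨a, b, ha, hb, hab⟩)
          · exact h
          · exact absurd hb (hnb b)
        · exact fun h => Or.inl h
  rw [ccount, ← hS, ← himg, Set.ncard_image_of_injOn hinj]

theorem side1 : ccount n (pcomp n τ ρ) σ + ccount n τ ρ = Ncount n τ ρ σ := by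
  classical
  set χ := qglue n τ ρ σ with hχ
  set A1 : Set (Set (QVert n)) :=
    {C | C ∈ χ.classes ∧ (∀ x ∈ C, Mid12 x) ∧ ∃ i : Fin n, Sum.inr (Sum.inl i) ∈ C} with hA1
  set A2 : Set (Set (QVert n)) :=
    {C | C ∈ χ.classes ∧ ∀ x ∈ C, ∃ i : Fin n, x = Sum.inr (Sum.inr (Sum.inl i))} with hA2
  have hunion : {C ∈ χ.classes | ∀ x ∈ C, Mid12 x} = A1 ∪ A2 := by
    ext C
    constructor
    · rintro ⟨hCcl, hCm⟩
      by_cases h : ∃ i : Fin n, Sum.inr (Sum.inl i) ∈ C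
      · exact Or.inl ⟨hCcl, hCm, h⟩
      · refine Or.inr ⟨hCcl, fun x hx => ?_⟩
        rcases hCm x hx with ⟨i, rfl⟩ | ⟨i, rfl⟩
        · exact absurd ⟨i, hx⟩ h
        · exact ⟨i, rfl⟩
    · rintro (⟨hCcl, hCm, _⟩ | ⟨hCcl, hCm⟩)
      · exact ⟨hCcl, hCm⟩
      · refine ⟨hCcl, fun x hx => ?_⟩
        obtain ⟨i, rfl⟩ := hCm x hx
        exact Or.inr ⟨i, rfl⟩
  have hdisj : Disjoint A1 A2 := by
    rw [Set.disjoint_left]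
    rintro C ⟨_, _, i, hi⟩ ⟨_, hm⟩
    obtain ⟨j, hj⟩ := hm _ hi
    simp at hj
  rw [Ncount, ← hχ, hunion, Set.ncard_union_eq hdisj (Set.toFinite _) (Set.toFinite _),
    ncardA1 n τ ρ σ, ncardA2 n τ ρ σ]

end Counting
section Duality

variable (n : ℕ)

/-- Flip of the triple, exchanging bottom and top. -/
def flip3 : TVert n → TVert n :=
  Sum.elim (fun i => Sum.inr (Sum.inr i)) (Sum.elim (fun i => Sum.inr (Sum.inl i)) Sum.inl)

theorem flip3_flip3 (x : TVert n) : flip3 n (flip3 n x) = x := by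
  rcases x with i | i | i <;> rfl

theorem flip3_embBot (a : DVert n) : flip3 n (embBot n a) = embTop n a.swap := by
  cases a <;> rfl

theorem flip3_embTop (a : DVert n) : flip3 n (embTop n a) = embBot n a.swap := by
  cases a <;> rfl

theorem flip3_embOut (a : DVert n) : flip3 n (embOut n a) = embOut n a.swap := by
  cases a <;> rfl

theorem glue_flip (τ ρ : Setoid (DVert n)) (x y : TVert n) :
    (glue n (pstar n τ) (pstar n ρ)).r x y ↔ (glue n ρ τ).r (flip3 n x) (flip3 n y) := by
  constructor
  · refine fun h => eqvGen_map' (flip3 n) ?_ h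
    rintro a b (⟨c, d, hcd, rfl, rfl⟩ | ⟨c, d, hcd, rfl, rfl⟩)
    · rw [flip3_embBot, flip3_embBot]
      exact EqvGen.rel _ _ (Or.inr ⟨c.swap, d.swap, hcd, rfl, rfl⟩)
    · rw [flip3_embTop, flip3_embTop]
      exact EqvGen.rel _ _ (Or.inl ⟨c.swap, d.swap, hcd, rfl, rfl⟩)
  · intro h
    have h2 := eqvGen_map' (flip3 n) (s := fun x y =>
      (∃ a b, (pstar n ρ).r a b ∧ x = embBot n a ∧ y = embBot n b) ∨
      (∃ a b, (pstar n τ).r a b ∧ x = embTop n a ∧ y = embTop n b)) ?_ h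
    · rwa [flip3_flip3, flip3_flip3] at h2
    · rintro a b (⟨c, d, hcd, rfl, rfl⟩ | ⟨c, d, hcd, rfl, rfl⟩)
      · rw [flip3_embBot, flip3_embBot]
        refine EqvGen.rel _ _ (Or.inr ⟨c.swap, d.swap, ?_, rfl, rfl⟩)
        show τ.r c.swap.swap d.swap.swap
        rwa [Sum.swap_swap, Sum.swap_swap]
      · rw [flip3_embTop, flip3_embTop]
        refine EqvGen.rel _ _ (Or.inl ⟨c.swap, d.swap, ?_, rfl, rfl⟩)
        show ρ.r c.swap.swap d.swap.swap
        rwa [Sum.swap_swap, Sum.swap_swap]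

theorem isMiddle_flip3 (x : TVert n) : isMiddle x ↔ isMiddle (flip3 n x) := by
  constructor
  · rintro ⟨i, rfl⟩; exact ⟨i, rfl⟩
  · rintro ⟨i, hi⟩
    rcases x with j | j | j
    · exact absurd hi (by simp [flip3])
    · exact ⟨j, rfl⟩
    · exact absurd hi (by simp [flip3])

theorem ccount_star (τ ρ : Setoid (DVert n)) :
    ccount n (pstar n τ) (pstar n ρ) = ccount n ρ τ := by
  exact ncard_classes_transport _ _ (flip3 n) (flip3 n) (flip3_flip3 n) (flip3_flip3 n)
    (glue_flip n τ ρ) isMiddle isMiddle (fun a => isMiddle_flip3 n a)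

theorem pcomp_star (τ ρ : Setoid (DVert n)) :
    pcomp n (pstar n τ) (pstar n ρ) = pstar n (pcomp n ρ τ) := by
  apply Setoid.ext
  intro x y
  show (glue n (pstar n τ) (pstar n ρ)).r (embOut n x) (embOut n y) ↔
    (glue n ρ τ).r (embOut n x.swap) (embOut n y.swap)
  rw [glue_flip n τ ρ, flip3_embOut, flip3_embOut]

/-- Flip of the quadruple, reversing the four rows. -/
def flip4 : QVert n → QVert n :=
  Sum.elim (fun i => Sum.inr (Sum.inr (Sum.inr i)))
    (Sum.elim (fun i => Sum.inr (Sum.inr (Sum.inl i)))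
      (Sum.elim (fun i => Sum.inr (Sum.inl i)) Sum.inl))

theorem flip4_flip4 (x : QVert n) : flip4 n (flip4 n x) = x := by
  rcases x with i | i | i | i <;> rfl

theorem flip4_qE0 (a : DVert n) : flip4 n (qE0 n a) = qE2 n a.swap := by cases a <;> rfl
theorem flip4_qE1 (a : DVert n) : flip4 n (qE1 n a) = qE1 n a.swap := by cases a <;> rfl
theorem flip4_qE2 (a : DVert n) : flip4 n (qE2 n a) = qE0 n a.swap := by cases a <;> rfl

theorem qglue_flip (τ ρ σ : Setoid (DVert n)) (x y : QVert n) :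
    (qglue n (pstar n σ) (pstar n ρ) (pstar n τ)).r x y ↔
      (qglue n τ ρ σ).r (flip4 n x) (flip4 n y) := by
  constructor
  · refine fun h => eqvGen_map' (flip4 n) ?_ h
    rintro a b (⟨c, d, hcd, rfl, rfl⟩ | ⟨c, d, hcd, rfl, rfl⟩ | ⟨c, d, hcd, rfl, rfl⟩)
    · rw [flip4_qE0, flip4_qE0]
      exact EqvGen.rel _ _ (Or.inr (Or.inr ⟨c.swap, d.swap, hcd, rfl, rfl⟩))
    · rw [flip4_qE1, flip4_qE1]
      exact EqvGen.rel _ _ (Or.inr (Or.inl ⟨c.swap, d.swap, hcd, rfl, rfl⟩))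
    · rw [flip4_qE2, flip4_qE2]
      exact EqvGen.rel _ _ (Or.inl ⟨c.swap, d.swap, hcd, rfl, rfl⟩)
  · intro h
    have h2 := eqvGen_map' (flip4 n)
      (s := qbase n (pstar n σ) (pstar n ρ) (pstar n τ)) ?_ h
    · rwa [flip4_flip4, flip4_flip4] at h2
    · rintro a b (⟨c, d, hcd, rfl, rfl⟩ | ⟨c, d, hcd, rfl, rfl⟩ | ⟨c, d, hcd, rfl, rfl⟩)
      · rw [flip4_qE0, flip4_qE0]
        refine EqvGen.rel _ _ (Or.inr (Or.inr ⟨c.swap, d.swap, ?_, rfl, rfl⟩))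
        show σ.r c.swap.swap d.swap.swap
        rwa [Sum.swap_swap, Sum.swap_swap]
      · rw [flip4_qE1, flip4_qE1]
        refine EqvGen.rel _ _ (Or.inr (Or.inl ⟨c.swap, d.swap, ?_, rfl, rfl⟩))
        show ρ.r c.swap.swap d.swap.swap
        rwa [Sum.swap_swap, Sum.swap_swap]
      · rw [flip4_qE2, flip4_qE2]
        refine EqvGen.rel _ _ (Or.inl ⟨c.swap, d.swap, ?_, rfl, rfl⟩)
        show τ.r c.swap.swap d.swap.swap
        rwa [Sum.swap_swap, Sum.swap_swap]

theorem Mid12_flip4 (x : QVert n) : Mid12 x ↔ Mid12 (flip4 n x) := by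
  constructor
  · rintro (⟨i, rfl⟩ | ⟨i, rfl⟩)
    · exact Or.inr ⟨i, rfl⟩
    · exact Or.inl ⟨i, rfl⟩
  · rintro (⟨i, hi⟩ | ⟨i, hi⟩) <;>
      rcases x with j | j | j | j <;>
      first
        | exact Or.inl ⟨j, rfl⟩
        | exact Or.inr ⟨j, rfl⟩
        | exact absurd hi (by simp [flip4])

theorem Ncount_flip (τ ρ σ : Setoid (DVert n)) :
    Ncount n (pstar n σ) (pstar n ρ) (pstar n τ) = Ncount n τ ρ σ := by
  exact ncard_classes_transport _ _ (flip4 n) (flip4 n) (flip4_flip4 n) (flip4_flip4 n)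
    (qglue_flip n τ ρ σ) Mid12 Mid12 (fun a => Mid12_flip4 n a)

end Duality

/-- the middle-component count satisfies the cocycle identity
`c(τ∘ρ, σ) + c(τ,ρ) = c(τ, ρ∘σ) + c(ρ,σ)`. -/
theorem ccount_cocycle (n : ℕ) (τ ρ σ : Setoid (DVert n)) :
    ccount n (pcomp n τ ρ) σ + ccount n τ ρ = ccount n τ (pcomp n ρ σ) + ccount n ρ σ := by
  have h1 := side1 n τ ρ σ
  have h2 := side1 n (pstar n σ) (pstar n ρ) (pstar n τ)
  rw [pcomp_star n σ ρ, ccount_star n (pcomp n ρ σ) τ, ccount_star n σ ρ,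
    Ncount_flip n τ ρ σ] at h2
  omega

end
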